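/- Suppose char K = 2. Let φ be a linear automorphism of V preserving f_Q (i.e. f_Q(φu, φw) = f_Q(u,w) for all u, w ∈ V) whose minimal polynomial equals (X − 1)^t for some t ≥ 1, and suppose V = U ⊕ W where U and W are φ-invariant subspaces, each spanned by the φ-orbit of a single vector, and each degenerate (U ∩ U^⊥ ≠ 0 and W ∩ W^⊥ ≠ 0, orthogonal complements taken with respect to f_Q). Then there is no φ-invariant subspace X with 0 < dim X < dim V on which the restriction of f_Q is nondegenerate. -/

import Mathlib

open Polynomial Module

variable {K V : Type*}

section Defs

variable [Field K] [AddCommGroup V] [Module K V]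

/-- The polar form `f_Q(u,w) = Q(u+w) - Q u - Q w` of a quadratic form. -/
def polarF (Q : QuadraticForm K V) (u w : V) : K := Q (u + w) - Q u - Q w

/-- `Q` is nondefective: its polar form is nondegenerate. -/
def Nondefective (Q : QuadraticForm K V) : Prop :=
  ∀ u : V, (∀ w : V, polarF Q u w = 0) → u = 0

/-- Membership in the orthogonal group `O(V,Q)`. -/
def InO (Q : QuadraticForm K V) (φ : V ≃ₗ[K] V) : Prop := ∀ v : V, Q (φ v) = Q v

/-- Membership in the special orthogonal group `SO(V,Q)`:
orthogonal and `dim im(φ - 1)` is even. -/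
def InSO (Q : QuadraticForm K V) (φ : V ≃ₗ[K] V) : Prop :=
  InO Q φ ∧ Even (Module.finrank K (LinearMap.range (φ.toLinearMap - LinearMap.id)))

/-- `φ` is a product of two involutions of `SO(V,Q)`. -/
def BireflSO (Q : QuadraticForm K V) (φ : V ≃ₗ[K] V) : Prop :=
  ∃ σ τ : V ≃ₗ[K] V, InSO Q σ ∧ InSO Q τ ∧ σ * σ = 1 ∧ τ * τ = 1 ∧ φ = σ * τ

/-- A subspace is totally isotropic if `Q` vanishes on it. -/
def TotIsotropic (Q : QuadraticForm K V) (U : Submodule K V) : Prop := ∀ u ∈ U, Q u = 0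

/-- A subspace invariant under a linear map. -/
def Invariant (f : V →ₗ[K] V) (U : Submodule K V) : Prop := ∀ u ∈ U, f u ∈ U

/-- The restriction of the polar form of `Q` to `U` is nondegenerate. -/
def NondegOn (Q : QuadraticForm K V) (U : Submodule K V) : Prop :=
  ∀ u ∈ U, (∀ w ∈ U, polarF Q u w = 0) → u = 0

/-- `f` is orthogonally indecomposable: no invariant subspace `W` with
`0 < dim W < dim V` on which the polar form of `Q` is nondegenerate. -/
def OrthIndec (Q : QuadraticForm K V) (f : V →ₗ[K] V) : Prop :=
  ¬ ∃ W : Submodule K V, Invariant f W ∧ 0 < Module.finrank K W ∧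
      Module.finrank K W < Module.finrank K V ∧ NondegOn Q W

/-- The subspace spanned by the `f`-orbit of `x`. -/
def cyclicSpan (f : V →ₗ[K] V) (x : V) : Submodule K V :=
  Submodule.span K (Set.range fun k : ℕ => (f ^ k) x)

/-- `f` is a cyclic linear map. -/
def IsCyclicEnd (f : V →ₗ[K] V) : Prop := ∃ x : V, cyclicSpan f x = ⊤

/-- `f` is of type 1 with exponent `m`: orthogonally indecomposable, bicyclic, and
with minimal polynomial `(X - 1) ^ m`. -/
def IsType1 (Q : QuadraticForm K V) (f : V →ₗ[K] V) (m : ℕ) : Prop :=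
  OrthIndec Q f ∧ 1 ≤ m ∧ minpoly K f = (X - 1) ^ m ∧
    ∃ x z : V, IsCompl (cyclicSpan f x) (cyclicSpan f z)

/-- Type 1o: type 1 with odd exponent. -/
def IsType1o (Q : QuadraticForm K V) (f : V →ₗ[K] V) : Prop :=
  ∃ m : ℕ, IsType1 Q f m ∧ Odd m

/-- Type 1e: type 1 with even exponent. -/
def IsType1e (Q : QuadraticForm K V) (f : V →ₗ[K] V) : Prop :=
  ∃ m : ℕ, IsType1 Q f m ∧ Even m

/-- The quadratic space `(V,Q)` is hyperbolic. -/
def HyperbolicSpace (Q : QuadraticForm K V) : Prop :=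
  ∃ U W : Submodule K V, TotIsotropic Q U ∧ TotIsotropic Q W ∧ IsCompl U W

/-- The transformation `f` is hyperbolic: `V` is a direct sum of two totally isotropic
`f`-invariant subspaces. -/
def HyperbolicMap (Q : QuadraticForm K V) (f : V →ₗ[K] V) : Prop :=
  ∃ U W : Submodule K V, TotIsotropic Q U ∧ TotIsotropic Q W ∧
    Invariant f U ∧ Invariant f W ∧ IsCompl U W

/-- `f` is semisimple: every invariant subspace has an invariant complement. -/
def SemisimpleEnd (f : V →ₗ[K] V) : Prop :=
  ∀ U : Submodule K V, Invariant f U → ∃ W : Submodule K V, Invariant f W ∧ IsCompl U W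

end Defs


namespace Stmt13Aux

variable {K V : Type*} [Field K] [AddCommGroup V] [Module K V]

lemma powApp (N : Module.End K V) (m k : ℕ) (v : V) :
    (N ^ (m + k)) v = (N ^ m) ((N ^ k) v) := by rw [pow_add]; rfl

lemma powZero {N : Module.End K V} {c : ℕ} {v : V} (hv : (N ^ c) v = 0)
    {m : ℕ} (hm : c ≤ m) : (N ^ m) v = 0 := by
  have : m = (m - c) + c := by omega
  rw [this, powApp, hv, map_zero]

lemma commApp {N ψ : Module.End K V} (hcomm : ψ * N = N * ψ) (m : ℕ) (v : V) :
    ψ ((N ^ m) v) = (N ^ m) (ψ v) := by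
  have h : ψ * N ^ m = N ^ m * ψ := (Commute.pow_right hcomm m)
  calc ψ ((N ^ m) v) = (ψ * N ^ m) v := rfl
    _ = (N ^ m * ψ) v := by rw [h]
    _ = (N ^ m) (ψ v) := rfl

lemma lemB {B : V →ₗ[K] V →ₗ[K] K} {N ψ : Module.End K V}
    (hadj : ∀ u w : V, B (N u) w = B u (N (ψ w)))
    (hcomm : ψ * N = N * ψ) :
    ∀ (i j : ℕ) (s r : V), (N ^ (i + j)) r = 0 → B ((N ^ i) s) ((N ^ j) r) = 0 := by
  intro i
  induction i with
  | zero =>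
    intro j s r h
    rw [zero_add] at h
    simp [pow_zero, h]
  | succ i ih =>
    intro j s r h
    have hps : (N ^ (i + 1)) s = N ((N ^ i) s) := by
      rw [pow_succ']; rfl
    rw [hps, hadj]
    have h2 : N (ψ ((N ^ j) r)) = (N ^ (j + 1)) (ψ r) := by
      rw [commApp hcomm j r]
      calc N ((N ^ j) (ψ r)) = (N * N ^ j) (ψ r) := rfl
        _ = (N ^ (j + 1)) (ψ r) := by rw [pow_succ']
    rw [h2]
    apply ih (j + 1)
    have h3 : (N ^ (i + (j + 1))) (ψ r) = ψ ((N ^ (i + (j + 1))) r) := (commApp hcomm _ r).symm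
    rw [h3]
    have h4 : i + (j + 1) = i + 1 + j := by omega
    rw [h4, h]
    exact map_zero ψ

lemma lemShift {B : V →ₗ[K] V →ₗ[K] K} {N ψ : Module.End K V}
    (hadj : ∀ u w : V, B (N u) w = B u (N (ψ w)))
    (hcomm : ψ * N = N * ψ)
    (hstar : ∀ u w : V, B (N u) w = B u (N w) + B (N u) (N w))
    (v : V) (d : ℕ) (hv : (N ^ (d + 1)) v = 0) :
    ∀ j i : ℕ, i + j = d → B ((N ^ i) v) ((N ^ j) v) = B ((N ^ d) v) v := by
  intro j
  induction j with
  | zero =>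
    intro i hi
    rw [add_zero] at hi
    subst hi
    simp [pow_zero]
  | succ j ih =>
    intro i hi
    have hstar' := hstar ((N ^ i) v) ((N ^ j) v)
    have e1 : N ((N ^ i) v) = (N ^ (i + 1)) v := by
      calc N ((N ^ i) v) = (N * N ^ i) v := rfl
        _ = (N ^ (i + 1)) v := by rw [pow_succ']
    have e2 : N ((N ^ j) v) = (N ^ (j + 1)) v := by
      calc N ((N ^ j) v) = (N * N ^ j) v := rfl
        _ = (N ^ (j + 1)) v := by rw [pow_succ']
    rw [e1, e2] at hstar'
    have hz : B ((N ^ (i + 1)) v) ((N ^ (j + 1)) v) = 0 := by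
      apply lemB hadj hcomm
      exact powZero hv (by omega)
    rw [hz, add_zero] at hstar'
    rw [← hstar']
    exact ih (i + 1) (by omega)

-- cont
lemma lemExtract {N : Module.End K V} {x : V} {a : ℕ} (hxa : (N ^ a) x = 0)
    (c : Fin a → K) (m : ℕ) (e : Fin a) (hlow : ∀ j : Fin a, (j : ℕ) < (e : ℕ) → c j = 0)
    (hm : (e : ℕ) + m = a - 1) :
    (N ^ m) (∑ j, c j • (N ^ (j : ℕ)) x) = c e • (N ^ (a - 1)) x := by
  rw [map_sum]
  rw [Finset.sum_eq_single e]
  · rw [map_smul, ← powApp]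
    have he : m + (e : ℕ) = a - 1 := by omega
    rw [he]
  · intro j _ hne
    rcases lt_or_gt_of_ne (fun h : (j : ℕ) = (e : ℕ) => hne (Fin.ext h)) with h | h
    · rw [hlow j h, zero_smul, map_zero]
    · rw [map_smul, ← powApp]
      have : (N ^ (m + (j : ℕ))) x = 0 := powZero hxa (by omega)
      rw [this, smul_zero]
  · intro h
    exact absurd (Finset.mem_univ e) h

lemma lemCoeffZero {N : Module.End K V} {x : V} {a : ℕ} (hxa : (N ^ a) x = 0)
    (hne : (N ^ (a - 1)) x ≠ 0)
    (c : Fin a → K) (k : ℕ) (hsum : (N ^ k) (∑ j, c j • (N ^ (j : ℕ)) x) = 0) :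
    ∀ j : Fin a, (j : ℕ) + k < a → c j = 0 := by
  suffices h : ∀ n : ℕ, ∀ j : Fin a, (j : ℕ) = n → (j : ℕ) + k < a → c j = 0 by
    exact fun j hj => h (j : ℕ) j rfl hj
  intro n
  induction n using Nat.strong_induction_on with
  | _ n ih =>
    intro j hj hjk
    have happ : (N ^ (a - 1 - k - n)) ((N ^ k) (∑ j, c j • (N ^ (j : ℕ)) x)) = 0 := by
      rw [hsum, map_zero]
    rw [← powApp] at happ
    have hm : a - 1 - k - n + k = a - 1 - n := by omega
    rw [hm] at happ
    have hx := lemExtract hxa c (a - 1 - n) j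
      (fun j' hj' => ih (j' : ℕ) (by omega) j' rfl (by omega)) (by omega)
    rw [hx] at happ
    exact (smul_eq_zero.mp happ).resolve_right hne



-- λ = 0 from degeneracy
lemma lamZero {B : V →ₗ[K] V →ₗ[K] K} {N ψ : Module.End K V}
    (hadj : ∀ u w : V, B (N u) w = B u (N (ψ w)))
    (hcomm : ψ * N = N * ψ)
    (hstar : ∀ u w : V, B (N u) w = B u (N w) + B (N u) (N w))
    {x : V} {a : ℕ} (ha : 1 ≤ a) (hxa : (N ^ a) x = 0)
    (c : Fin a → K)
    (hu0 : (∑ j, c j • (N ^ (j : ℕ)) x) ≠ 0)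
    (horth : ∀ k : ℕ, B (∑ j, c j • (N ^ (j : ℕ)) x) ((N ^ k) x) = 0) :
    B ((N ^ (a - 1)) x) x = 0 := by
  classical
  set S := Finset.univ.filter (fun j : Fin a => c j ≠ 0) with hSdef
  have hSne : S.Nonempty := by
    by_contra h
    apply hu0
    apply Finset.sum_eq_zero
    intro j _
    have : c j = 0 := by
      by_contra hc
      exact h ⟨j, by simp [hSdef, hc]⟩
    rw [this, zero_smul]
  set e := S.min' hSne with hedef
  have hce : c e ≠ 0 := by
    have := S.min'_mem hSne
    simpa [hSdef] using this
  have hlow : ∀ j : Fin a, (j : ℕ) < (e : ℕ) → c j = 0 := by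
    intro j hj
    by_contra hc
    have hjS : j ∈ S := by simp [hSdef, hc]
    have := S.min'_le j hjS
    rw [← hedef] at this
    exact absurd (lt_of_lt_of_le hj this) (lt_irrefl _)
  have h0 := horth (a - 1 - (e : ℕ))
  rw [map_sum, LinearMap.sum_apply] at h0
  rw [Finset.sum_eq_single e] at h0
  · rw [map_smul, LinearMap.smul_apply] at h0
    have hBe : B ((N ^ (e : ℕ)) x) ((N ^ (a - 1 - (e : ℕ))) x) = 0 := by
      have := smul_eq_zero.mp h0
      exact this.resolve_left hce
    have hshift := lemShift hadj hcomm hstar x (a - 1) (by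
      have : a - 1 + 1 = a := by omega
      rw [this]; exact hxa) (a - 1 - (e : ℕ)) (e : ℕ) (by
        have : (e : ℕ) < a := e.isLt
        omega)
    rw [← hshift]
    exact hBe
  · intro j _ hne
    rcases lt_or_gt_of_ne (fun h : (j : ℕ) = (e : ℕ) => hne (Fin.ext h)) with h | h
    · rw [hlow j h, zero_smul, map_zero, LinearMap.zero_apply]
    · rw [map_smul, LinearMap.smul_apply]
      have hz : B ((N ^ (j : ℕ)) x) ((N ^ (a - 1 - (e : ℕ))) x) = 0 := by
        apply lemB hadj hcomm
        apply powZero hxa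
        have : (e : ℕ) < a := e.isLt
        omega
      rw [hz, smul_zero]
  · intro h
    exact absurd (Finset.mem_univ e) h

-- diagonal vanishing on a degenerate cyclic subspace
lemma lemDiag {B : V →ₗ[K] V →ₗ[K] K} {N ψ : Module.End K V}
    (hadj : ∀ u w : V, B (N u) w = B u (N (ψ w)))
    (hcomm : ψ * N = N * ψ)
    {x : V} {a : ℕ} (ha : 1 ≤ a) (hxa : (N ^ a) x = 0)
    (hne : (N ^ (a - 1)) x ≠ 0)
    (hlam : B ((N ^ (a - 1)) x) x = 0)
    (c : ℕ) (hc : 1 ≤ c) (co : Fin a → K)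
    (hker : (N ^ c) (∑ j, co j • (N ^ (j : ℕ)) x) = 0) :
    B ((N ^ (c - 1)) (∑ j, co j • (N ^ (j : ℕ)) x)) (∑ j, co j • (N ^ (j : ℕ)) x) = 0 := by
  rcases le_or_gt a (c - 1) with hca | hca
  · -- N^(c-1) kills everything in U
    have hz : (N ^ (c - 1)) (∑ j, co j • (N ^ (j : ℕ)) x) = 0 := by
      rw [map_sum]
      apply Finset.sum_eq_zero
      intro j _
      rw [map_smul, ← powApp]
      have : (N ^ (c - 1 + (j : ℕ))) x = 0 := powZero hxa (by omega)
      rw [this, smul_zero]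
    rw [hz, map_zero, LinearMap.zero_apply]
  · have hcoef : ∀ j : Fin a, (j : ℕ) + c < a → co j = 0 := lemCoeffZero hxa hne co c hker
    rw [map_sum, map_sum]
    apply Finset.sum_eq_zero
    intro k _
    rw [map_sum, LinearMap.sum_apply]
    apply Finset.sum_eq_zero
    intro j _
    simp only [map_smul, LinearMap.smul_apply, ← powApp]
    by_cases hj0 : co j = 0
    · simp [hj0]
    · by_cases hk0 : co k = 0
      · simp [hk0]
      · have hB : (B ((N ^ (c - 1 + (j : ℕ))) x)) ((N ^ (k : ℕ)) x) = 0 := by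
          have hja : a ≤ (j : ℕ) + c := by
            by_contra h
            exact hj0 (hcoef j (by omega))
          have hka : a ≤ (k : ℕ) + c := by
            by_contra h
            exact hk0 (hcoef k (by omega))
          have hjlt : (j : ℕ) < a := j.isLt
          have hklt : (k : ℕ) < a := k.isLt
          by_cases hbig : a ≤ (c - 1 + (j : ℕ)) + (k : ℕ)
          · exact lemB hadj hcomm _ _ x x (powZero hxa hbig)
          · have hk' : (k : ℕ) = 0 := by omega
            have hc' : c - 1 + (j : ℕ) = a - 1 := by omega
            rw [hc', hk', pow_zero]
            exact hlam
        rw [hB]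
        simp

-- kernel of N on a cyclic space is spanned by the top vector
lemma lemKerU {N : Module.End K V} {x : V} {a : ℕ} (ha : 1 ≤ a)
    (hxa : (N ^ a) x = 0) (hne : (N ^ (a - 1)) x ≠ 0)
    (c : Fin a → K) (hk : N (∑ j, c j • (N ^ (j : ℕ)) x) = 0) :
    ∃ γ : K, (∑ j, c j • (N ^ (j : ℕ)) x) = γ • (N ^ (a - 1)) x := by
  have h1 : (N ^ 1) (∑ j, c j • (N ^ (j : ℕ)) x) = 0 := by
    rw [pow_one]; exact hk
  have hz := lemCoeffZero hxa hne c 1 h1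
  refine ⟨c ⟨a - 1, by omega⟩, ?_⟩
  rw [Finset.sum_eq_single (⟨a - 1, by omega⟩ : Fin a)]
  · intro j _ hne'
    have hj : (j : ℕ) ≠ a - 1 := fun h => hne' (Fin.ext h)
    have : c j = 0 := hz j (by have := j.isLt; omega)
    rw [this, zero_smul]
  · intro h
    exact absurd (Finset.mem_univ _) h

lemma lemAdjPow {B : V →ₗ[K] V →ₗ[K] K} {N ψ : Module.End K V}
    (hadj : ∀ u w : V, B (N u) w = B u (N (ψ w)))
    (hcomm : ψ * N = N * ψ) :
    ∀ (i : ℕ) (u w : V), B ((N ^ i) u) w = B u ((N ^ i * ψ ^ i) w) := by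
  intro i
  induction i with
  | zero => intro u w; simp
  | succ i ih =>
    intro u w
    have h1 : (N ^ (i + 1)) u = (N ^ i) (N u) := by rw [pow_succ]; rfl
    rw [h1, ih, hadj]
    congr 1
    have key : N * ψ * (N ^ i * ψ ^ i) = N ^ (i + 1) * ψ ^ (i + 1) := by
      have hcψ : Commute ψ N := hcomm
      have h2 : ψ * N ^ i = N ^ i * ψ := (hcψ.pow_right i).eq
      calc N * ψ * (N ^ i * ψ ^ i) = N * (ψ * N ^ i) * ψ ^ i := by
            rw [mul_assoc, mul_assoc, mul_assoc]
        _ = N * (N ^ i * ψ) * ψ ^ i := by rw [h2]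
        _ = (N * N ^ i) * (ψ * ψ ^ i) := by
            rw [mul_assoc, mul_assoc, mul_assoc]
        _ = N ^ (i + 1) * ψ ^ (i + 1) := by rw [← pow_succ', ← pow_succ']
    calc N (ψ ((N ^ i * ψ ^ i) w)) = (N * ψ * (N ^ i * ψ ^ i)) w := rfl
      _ = (N ^ (i + 1) * ψ ^ (i + 1)) w := by rw [key]

lemma lemCross {B : V →ₗ[K] V →ₗ[K] K} {N ψ : Module.End K V}
    (hsymm : ∀ u w : V, B u w = B w u)
    (hadj : ∀ u w : V, B (N u) w = B u (N (ψ w)))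
    (hψN : ψ * N = 1 - ψ) (hNψ : N * ψ = 1 - ψ)
    (hchar2V : ∀ v : V, v + v = 0)
    (c : ℕ) (hc : 1 ≤ c) (u w : V) (hu : (N ^ c) u = 0) :
    B ((N ^ (c - 1)) u) w + B ((N ^ (c - 1)) w) u = 0 := by
  have hcomm : ψ * N = N * ψ := by rw [hψN, hNψ]
  set m := c - 1 with hm
  have h1 : B ((N ^ m) w) u = B ((N ^ m) ((ψ ^ m) u)) w := by
    rw [lemAdjPow hadj hcomm m w u, hsymm]
    rfl
  rw [h1]
  have h2 : B ((N ^ m) u) w + B ((N ^ m) ((ψ ^ m) u)) w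
      = B ((N ^ m) u + (N ^ m) ((ψ ^ m) u)) w := by
    rw [map_add, LinearMap.add_apply]
  rw [h2]
  have h3 : (N ^ m) u + (N ^ m) ((ψ ^ m) u) = 0 := by
    -- equals N^m ((1 + ψ^m) u) = N^m ((1 - ψ^m) u)  (char 2)
    have e1 : (N ^ m) u + (N ^ m) ((ψ ^ m) u) = (N ^ m) (u - (ψ ^ m) u) := by
      rw [map_sub]
      have := hchar2V ((N ^ m) ((ψ ^ m) u))
      -- a + b = a - b since b + b = 0
      have hb : (N ^ m) ((ψ ^ m) u) = -((N ^ m) ((ψ ^ m) u)) := by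
        rw [eq_neg_iff_add_eq_zero]; exact this
      nth_rewrite 1 [hb]
      rw [sub_eq_add_neg]
    rw [e1]
    have e2 : u - (ψ ^ m) u = ((1 - ψ ^ m : Module.End K V)) u := by
      rw [LinearMap.sub_apply]; rfl
    rw [e2]
    have e3 : (1 - ψ ^ m : Module.End K V) = (∑ i ∈ Finset.range m, ψ ^ i) * (ψ * N) := by
      have hg := geom_sum_mul ψ m
      rw [hψN]
      have : (∑ i ∈ Finset.range m, ψ ^ i) * (1 - ψ) = -((∑ i ∈ Finset.range m, ψ ^ i) * (ψ - 1)) := by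
        rw [← mul_neg, neg_sub]
      rw [this, hg, neg_sub]
    rw [e3]
    have hcN : Commute N ((∑ i ∈ Finset.range m, ψ ^ i) * ψ) := by
      have hcψ : Commute N ψ := hcomm.symm
      have : Commute N (∑ i ∈ Finset.range m, ψ ^ i) :=
        Commute.sum_right _ _ _ (fun i _ => hcψ.pow_right i)
      exact this.mul_right hcψ
    have key : N ^ m * ((∑ i ∈ Finset.range m, ψ ^ i) * (ψ * N))
        = ((∑ i ∈ Finset.range m, ψ ^ i) * ψ) * N ^ c := by
      have hcNm := (hcN.symm.pow_right m).eq
      have hm1 : m + 1 = c := by omega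
      calc N ^ m * ((∑ i ∈ Finset.range m, ψ ^ i) * (ψ * N))
          = N ^ m * ((∑ i ∈ Finset.range m, ψ ^ i) * ψ) * N := by
            simp only [mul_assoc]
        _ = ((∑ i ∈ Finset.range m, ψ ^ i) * ψ) * N ^ m * N := by rw [← hcNm]
        _ = ((∑ i ∈ Finset.range m, ψ ^ i) * ψ) * N ^ c := by
            rw [mul_assoc, ← pow_succ, hm1]
    calc (N ^ m) (((∑ i ∈ Finset.range m, ψ ^ i) * (ψ * N)) u)
        = (N ^ m * ((∑ i ∈ Finset.range m, ψ ^ i) * (ψ * N))) u := rfl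
      _ = (((∑ i ∈ Finset.range m, ψ ^ i) * ψ) * N ^ c) u := by rw [key]
      _ = ((∑ i ∈ Finset.range m, ψ ^ i) * ψ) ((N ^ c) u) := rfl
      _ = 0 := by rw [hu, map_zero]
  rw [h3, map_zero, LinearMap.zero_apply]


lemma span_inv {g : V →ₗ[K] V} {S : Set V}
    (h : ∀ v ∈ S, g v ∈ Submodule.span K S) :
    ∀ v ∈ Submodule.span K S, g v ∈ Submodule.span K S := by
  have hle : Submodule.span K S ≤ Submodule.comap g (Submodule.span K S) :=
    Submodule.span_le.mpr (fun v hv => h v hv)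
  exact fun v hv => hle hv

lemma cyclicSpan_eq_span_fin (f N : Module.End K V) (hfN : ∀ v, N v = f v - v)
    (x : V) (a : ℕ) (hxa : (N ^ a) x = 0) :
    cyclicSpan f x = Submodule.span K (Set.range fun j : Fin a => (N ^ (j : ℕ)) x) := by
  set S := Submodule.span K (Set.range fun j : Fin a => (N ^ (j : ℕ)) x) with hS
  have powApp : ∀ (m k : ℕ) (v : V), (N ^ (m + k)) v = (N ^ m) ((N ^ k) v) := by
    intro m k v; rw [pow_add]; rfl
  have hgen : ∀ k : ℕ, (N ^ k) x ∈ S := by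
    intro k
    rcases lt_or_ge k a with hk | hk
    · exact Submodule.subset_span ⟨⟨k, hk⟩, rfl⟩
    · have : (N ^ k) x = 0 := by
        have : k = (k - a) + a := by omega
        rw [this, powApp, hxa, map_zero]
      rw [this]; exact S.zero_mem
  have hSN : ∀ v ∈ S, N v ∈ S := by
    apply span_inv
    rintro v ⟨j, rfl⟩
    have : N ((N ^ (j : ℕ)) x) = (N ^ ((j : ℕ) + 1)) x := by
      rw [add_comm, powApp, pow_one]
    rw [this]; exact hgen _
  have hSf : ∀ v ∈ S, f v ∈ S := by
    intro v hv
    have : f v = N v + v := by rw [hfN]; abel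
    rw [this]; exact S.add_mem (hSN v hv) hv
  apply le_antisymm
  · rw [cyclicSpan, Submodule.span_le]
    rintro v ⟨k, rfl⟩
    show (f ^ k) x ∈ S
    induction k with
    | zero => simpa using hgen 0
    | succ k ih =>
      have hh : (f ^ (k + 1)) x = f ((f ^ k) x) := by
        rw [pow_succ']; rfl
      rw [hh]; exact hSf _ ih
  · rw [hS, Submodule.span_le]
    rintro v ⟨j, rfl⟩
    -- N^j x ∈ cyclicSpan f x
    have hCf : ∀ v ∈ cyclicSpan f x, f v ∈ cyclicSpan f x := by
      apply span_inv
      rintro v ⟨k, rfl⟩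
      have : f ((f ^ k) x) = (f ^ (k + 1)) x := by rw [pow_succ']; rfl
      rw [this]
      exact Submodule.subset_span ⟨k + 1, rfl⟩
    have hCN : ∀ v ∈ cyclicSpan f x, N v ∈ cyclicSpan f x := by
      intro v hv
      rw [hfN]
      exact Submodule.sub_mem _ (hCf v hv) hv
    show (N ^ (j : ℕ)) x ∈ cyclicSpan f x
    generalize (j : ℕ) = n
    induction n with
    | zero =>
      have hx0 : x ∈ cyclicSpan f x := Submodule.subset_span ⟨0, by simp⟩
      simpa using hx0
    | succ k ih =>
      have hh : (N ^ (k + 1)) x = N ((N ^ k) x) := by rw [pow_succ']; rfl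
      rw [hh]
      exact hCN _ ih


end Stmt13Aux

theorem stmt13 [Field K] [AddCommGroup V] [Module K V] [FiniteDimensional K V]
    (Q : QuadraticForm K V) (hQ : Nondefective Q)
    (hchar : ringChar K = 2) (φ : V ≃ₗ[K] V)
    (hpres : ∀ u w : V, polarF Q (φ u) (φ w) = polarF Q u w)
    (t : ℕ) (ht : 1 ≤ t) (hmin : minpoly K φ.toLinearMap = (Polynomial.X - 1) ^ t)
    (x z : V)
    (hcompl : IsCompl (cyclicSpan φ.toLinearMap x) (cyclicSpan φ.toLinearMap z))
    (hUdeg : ∃ u ∈ cyclicSpan φ.toLinearMap x, u ≠ 0 ∧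
        ∀ w ∈ cyclicSpan φ.toLinearMap x, polarF Q u w = 0)
    (hWdeg : ∃ u ∈ cyclicSpan φ.toLinearMap z, u ≠ 0 ∧
        ∀ w ∈ cyclicSpan φ.toLinearMap z, polarF Q u w = 0) :
    OrthIndec Q φ.toLinearMap := by
  classical
  open Stmt13Aux in
  set N : Module.End K V := φ.toLinearMap - 1 with hNdef
  set ψ : Module.End K V := φ.symm.toLinearMap with hψdef
  have hNv : ∀ v : V, N v = φ v - v := fun v => rfl
  have hψv : ∀ v : V, ψ v = φ.symm v := fun v => rfl
  haveI hchp : CharP K 2 := ringChar.of_eq hchar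
  have h2K : (2 : K) = 0 := by exact_mod_cast CharP.cast_eq_zero K 2
  have haddK : ∀ s : K, s + s = 0 := fun s => by rw [← two_mul, h2K, zero_mul]
  have hnegK : ∀ s : K, -s = s := fun s => neg_eq_of_add_eq_zero_left (haddK s)
  have hchar2V : ∀ v : V, v + v = 0 := fun v => by
    have h : v + v = (2 : K) • v := by rw [two_smul]
    rw [h, h2K, zero_smul]
  set B : V →ₗ[K] V →ₗ[K] K := QuadraticMap.polarBilin Q with hBdef
  have hBpolar : ∀ u w : V, polarF Q u w = B u w := fun u w => rfl
  have hsymm : ∀ u w : V, B u w = B w u := fun u w => by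
    rw [← hBpolar, ← hBpolar]
    exact QuadraticMap.polar_comm _ u w
  have hpresB : ∀ u w : V, B (φ u) (φ w) = B u w := fun u w => by
    rw [← hBpolar, ← hBpolar]
    exact hpres u w
  have hφψ : ∀ v : V, φ (ψ v) = v := fun v => φ.apply_symm_apply v
  have hadj : ∀ u w : V, B (N u) w = B u (N (ψ w)) := by
    intro u w
    have hL : B (N u) w = B u (ψ w) - B u w := by
      rw [hNv u]
      simp only [map_sub, LinearMap.sub_apply]
      congr 1
      calc B (φ u) w = B (φ u) (φ (ψ w)) := by rw [hφψ]
        _ = B u (ψ w) := hpresB u (ψ w)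
    have hR : B u (N (ψ w)) = B u w - B u (ψ w) := by
      rw [hNv (ψ w)]
      simp only [map_sub]
      congr 1
      rw [hφψ]
    rw [hL, hR, ← neg_sub (B u (ψ w)) (B u w), hnegK]
  have hψN : ψ * N = 1 - ψ := by
    ext v
    show ψ (N v) = v - ψ v
    rw [hNv, map_sub]
    congr 1
    exact φ.symm_apply_apply v
  have hNψ : N * ψ = 1 - ψ := by
    ext v
    show N (ψ v) = v - ψ v
    rw [hNv, hφψ]
  have hcomm : ψ * N = N * ψ := by rw [hψN, hNψ]
  have hstar : ∀ u w : V, B (N u) w = B u (N w) + B (N u) (N w) := by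
    intro u w
    have h1 : B (N u) w = B (φ u) w - B u w := by
      rw [hNv u]
      simp only [map_sub, LinearMap.sub_apply]
    have h2 : B u (N w) = B u (φ w) - B u w := by
      rw [hNv w]
      simp only [map_sub]
    have h3 : B (N u) (N w) = B u w - B (φ u) w - B u (φ w) + B u w := by
      rw [hNv u, hNv w]
      simp only [map_sub, LinearMap.sub_apply]
      rw [hpresB]
      ring
    rw [h1, h2, h3]
    linear_combination (B (φ u) w - B u w) * h2K
  have hNt : N ^ t = 0 := by
    have h := minpoly.aeval K φ.toLinearMap
    rw [hmin] at h
    rw [map_pow, map_sub, Polynomial.aeval_X, map_one] at h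
    exact h
  -- generic facts about the two cyclic summands
  have powInv : ∀ (S : Submodule K V), (∀ u ∈ S, N u ∈ S) → ∀ k, ∀ u ∈ S, (N ^ k) u ∈ S := by
    intro S hS k
    induction k with
    | zero => intro u hu; simpa using hu
    | succ k ih =>
      intro u hu
      have h1 : (N ^ (k + 1)) u = N ((N ^ k) u) := by rw [pow_succ']; rfl
      rw [h1]
      exact hS _ (ih u hu)
  have key : ∀ y : V,
      (∃ u ∈ cyclicSpan φ.toLinearMap y, u ≠ 0 ∧
        ∀ w ∈ cyclicSpan φ.toLinearMap y, polarF Q u w = 0) →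
      ∃ aa : ℕ, 1 ≤ aa ∧ (N ^ aa) y = 0 ∧ (N ^ (aa - 1)) y ≠ 0 ∧
        (∀ u ∈ cyclicSpan φ.toLinearMap y, N u ∈ cyclicSpan φ.toLinearMap y) ∧
        (∀ u ∈ cyclicSpan φ.toLinearMap y, ∀ cc : ℕ, 1 ≤ cc → (N ^ cc) u = 0 →
          B ((N ^ (cc - 1)) u) u = 0) ∧
        (∀ u ∈ cyclicSpan φ.toLinearMap y, N u = 0 →
          ∃ γ : K, u = γ • (N ^ (aa - 1)) y) := by
    intro y hdeg
    obtain ⟨u₀, hu₀U, hu₀ne, hu₀orth⟩ := hdeg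
    have hext : ∃ k : ℕ, (N ^ k) y = 0 := ⟨t, by rw [hNt]; rfl⟩
    set aa := Nat.find hext with haadef
    have hxa : (N ^ aa) y = 0 := Nat.find_spec hext
    have hane : ∀ k, k < aa → (N ^ k) y ≠ 0 := fun k hk => Nat.find_min hext hk
    have hspanU : cyclicSpan φ.toLinearMap y
        = Submodule.span K (Set.range fun j : Fin aa => (N ^ (j : ℕ)) y) :=
      Stmt13Aux.cyclicSpan_eq_span_fin φ.toLinearMap N (fun v => rfl) y aa hxa
    have hrep : ∀ u ∈ cyclicSpan φ.toLinearMap y,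
        ∃ c : Fin aa → K, ∑ j, c j • (N ^ (j : ℕ)) y = u := by
      intro u hu
      rw [hspanU] at hu
      exact (Submodule.mem_span_range_iff_exists_fun K).mp hu
    have ha1 : 1 ≤ aa := by
      by_contra h
      have haa0 : aa = 0 := by omega
      obtain ⟨c, hc⟩ := hrep u₀ hu₀U
      apply hu₀ne
      rw [← hc]
      have : (Finset.univ : Finset (Fin aa)) = ∅ := by
        rw [haa0]; rfl
      rw [this, Finset.sum_empty]
    have hne : (N ^ (aa - 1)) y ≠ 0 := hane (aa - 1) (by omega)
    have hmem : ∀ k : ℕ, (N ^ k) y ∈ cyclicSpan φ.toLinearMap y := by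
      intro k
      rw [hspanU]
      rcases lt_or_ge k aa with hk | hk
      · exact Submodule.subset_span ⟨⟨k, hk⟩, rfl⟩
      · have h0 : (N ^ k) y = 0 := Stmt13Aux.powZero hxa hk
        rw [h0]
        exact Submodule.zero_mem _
    have hlam : B ((N ^ (aa - 1)) y) y = 0 := by
      obtain ⟨c, hc⟩ := hrep u₀ hu₀U
      apply Stmt13Aux.lamZero hadj hcomm hstar ha1 hxa c
        (by rw [hc]; exact hu₀ne)
      intro k
      rw [hc, ← hBpolar]
      exact hu₀orth _ (hmem k)
    refine ⟨aa, ha1, hxa, hne, ?_, ?_, ?_⟩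
    · intro u hu
      obtain ⟨c, hc⟩ := hrep u hu
      rw [← hc, map_sum]
      refine Submodule.sum_mem _ ?_
      intro j _
      rw [map_smul]
      refine Submodule.smul_mem _ _ ?_
      have h1 : N ((N ^ (j : ℕ)) y) = (N ^ (1 + (j : ℕ))) y := by
        rw [Stmt13Aux.powApp, pow_one]
      rw [h1]
      exact hmem _
    · intro u hu cc hcc hker
      obtain ⟨c, hc⟩ := hrep u hu
      rw [← hc]
      exact Stmt13Aux.lemDiag hadj hcomm ha1 hxa hne hlam cc hcc c
        (by rw [hc]; exact hker)
    · intro u hu hku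
      obtain ⟨c, hc⟩ := hrep u hu
      have := Stmt13Aux.lemKerU ha1 hxa hne c (by rw [hc]; exact hku)
      rw [hc] at this
      exact this
  obtain ⟨a, ha1, hxa, hxane, hUinv, hUdiag, hUker⟩ := key x hUdeg
  obtain ⟨b, hb1, hzb, hzbne, hWinv, hWdiag, hWker⟩ := key z hWdeg
  -- decomposition of V
  have hdecomp : ∀ v : V, ∃ u ∈ cyclicSpan φ.toLinearMap x,
      ∃ w ∈ cyclicSpan φ.toLinearMap z, v = u + w := by
    intro v
    have hv : v ∈ cyclicSpan φ.toLinearMap x ⊔ cyclicSpan φ.toLinearMap z := by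
      rw [hcompl.sup_eq_top]
      trivial
    obtain ⟨u, hu, w, hw, huw⟩ := Submodule.mem_sup.mp hv
    exact ⟨u, hu, w, hw, huw.symm⟩
  have hsplit : ∀ u w : V, u ∈ cyclicSpan φ.toLinearMap x →
      w ∈ cyclicSpan φ.toLinearMap z → u + w = 0 → u = 0 ∧ w = 0 := by
    intro u w hu hw h
    have huw : u = -w := eq_neg_of_add_eq_zero_left h
    have hu' : u ∈ cyclicSpan φ.toLinearMap z := by
      rw [huw]; exact Submodule.neg_mem _ hw
    have hu0 : u = 0 := Submodule.disjoint_def.mp hcompl.disjoint u hu hu'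
    refine ⟨hu0, ?_⟩
    rw [hu0, zero_add] at h
    exact h
  -- the supposed nondegenerate invariant subspace
  rintro ⟨X, hXinv, hXpos, hXlt, hXnd⟩
  have hXinvN : ∀ y ∈ X, N y ∈ X := by
    intro y hy
    have h1 := hXinv y hy
    have h2 : N y = φ.toLinearMap y - y := rfl
    rw [h2]
    exact X.sub_mem h1 hy
  have hXpow := powInv X hXinvN
  have hXne : X ≠ ⊥ := by
    intro h
    rw [h] at hXpos
    simp at hXpos
  have hexX : ∃ cc : ℕ, ∀ y ∈ X, (N ^ cc) y = 0 :=
    ⟨t, fun y _ => by rw [hNt]; rfl⟩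
  set c := Nat.find hexX with hcdef
  have hcX : ∀ y ∈ X, (N ^ c) y = 0 := Nat.find_spec hexX
  have hc1 : 1 ≤ c := by
    by_contra h
    have hc0 : c = 0 := by omega
    apply hXne
    rw [Submodule.eq_bot_iff]
    intro y hy
    have h1 := hcX y hy
    rw [hc0, pow_zero] at h1
    exact h1
  have hvex : ¬ (∀ y ∈ X, (N ^ (c - 1)) y = 0) := Nat.find_min hexX (by omega)
  push_neg at hvex
  obtain ⟨v₀, hv₀X, hv₀ne⟩ := hvex
  set k1 := (N ^ (c - 1)) v₀ with hk1def
  have hk1ne : k1 ≠ 0 := hv₀ne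
  have hk1X : k1 ∈ X := hXpow (c - 1) v₀ hv₀X
  have hk1ker : N k1 = 0 := by
    show N ((N ^ (c - 1)) v₀) = 0
    have h1 : N ((N ^ (c - 1)) v₀) = (N ^ (1 + (c - 1))) v₀ := by
      rw [Stmt13Aux.powApp, pow_one]
    rw [h1]
    have h2 : 1 + (c - 1) = c := by omega
    rw [h2]
    exact hcX v₀ hv₀X
  -- X is invariant under φ⁻¹
  have hmapX : Submodule.map φ.toLinearMap X = X := by
    apply Submodule.eq_of_le_of_finrank_le
    · intro v hv
      obtain ⟨y, hy, rfl⟩ := hv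
      exact hXinv y hy
    · rw [LinearEquiv.finrank_map_eq φ X]
  have hψX : ∀ y ∈ X, ψ y ∈ X := by
    intro y hy
    rw [← hmapX] at hy
    obtain ⟨w, hwX, hwy⟩ := hy
    have h1 : ψ y = w := by
      rw [← hwy]
      exact φ.symm_apply_apply w
    rw [h1]
    exact hwX
  -- the orthogonal complement of X
  set Xp : Submodule K V := ⨅ y : X, LinearMap.ker (B (y : V)) with hXpdef
  have hXpmem : ∀ v : V, v ∈ Xp ↔ ∀ y ∈ X, B y v = 0 := by
    intro v
    rw [hXpdef]
    simp only [Submodule.mem_iInf, LinearMap.mem_ker, Subtype.forall]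
  have hXXp : ∀ v, v ∈ X → v ∈ Xp → v = 0 := by
    intro v hvX hvP
    apply hXnd v hvX
    intro w hw
    rw [hBpolar, hsymm]
    exact (hXpmem v).mp hvP w hw
  have hXpφ : ∀ v ∈ Xp, φ.toLinearMap v ∈ Xp := by
    intro v hv
    rw [hXpmem] at hv ⊢
    intro y hy
    have h1 : B y (φ.toLinearMap v) = B (ψ y) v := by
      calc B y (φ.toLinearMap v) = B (φ (ψ y)) (φ v) := by rw [hφψ]; rfl
        _ = B (ψ y) v := hpresB (ψ y) v
    rw [h1]
    exact hv (ψ y) (hψX y hy)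
  have hXpN : ∀ v ∈ Xp, N v ∈ Xp := by
    intro v hv
    have h2 : N v = φ.toLinearMap v - v := rfl
    rw [h2]
    exact Xp.sub_mem (hXpφ v hv) hv
  have hXppow := powInv Xp hXpN
  -- Xp is nonzero
  set L : V →ₗ[K] (X →ₗ[K] K) :=
    { toFun := fun v => (B.flip v).comp X.subtype
      map_add' := by intro u v; ext y; simp
      map_smul' := by intro a v; ext y; simp } with hLdef
  have hkerL : LinearMap.ker L = Xp := by
    ext v
    rw [LinearMap.mem_ker, hXpmem]
    constructor
    · intro h y hy
      have h1 : ((B.flip v).comp X.subtype) ⟨y, hy⟩ = 0 := by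
        rw [show ((B.flip v).comp X.subtype) = L v from rfl, h]
        rfl
      simpa using h1
    · intro h
      ext y
      show B.flip v (X.subtype y) = 0
      simp only [LinearMap.flip_apply, Submodule.subtype_apply]
      exact h y y.2
  have hXpne : Xp ≠ ⊥ := by
    intro h
    have h1 := LinearMap.finrank_range_add_finrank_ker L
    rw [hkerL, h, finrank_bot, add_zero] at h1
    have h2 : finrank K (LinearMap.range L) ≤ finrank K (X →ₗ[K] K) :=
      Submodule.finrank_le _
    rw [Module.finrank_linearMap_self] at h2
    omega
  obtain ⟨w₁, hw₁Xp, hw₁ne⟩ := Submodule.exists_mem_ne_zero_of_ne_bot hXpne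
  have hexP : ∃ cc : ℕ, ∀ v ∈ Xp, (N ^ cc) v = 0 :=
    ⟨t, fun v _ => by rw [hNt]; rfl⟩
  set c' := Nat.find hexP with hc'def
  have hcP : ∀ v ∈ Xp, (N ^ c') v = 0 := Nat.find_spec hexP
  have hc'1 : 1 ≤ c' := by
    by_contra h
    have hc0 : c' = 0 := by omega
    apply hw₁ne
    have h1 := hcP w₁ hw₁Xp
    rw [hc0, pow_zero] at h1
    exact h1
  have hvex' : ¬ (∀ v ∈ Xp, (N ^ (c' - 1)) v = 0) := Nat.find_min hexP (by omega)
  push_neg at hvex'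
  obtain ⟨v₁, hv₁Xp, hv₁ne⟩ := hvex'
  set k2 := (N ^ (c' - 1)) v₁ with hk2def
  have hk2ne : k2 ≠ 0 := hv₁ne
  have hk2Xp : k2 ∈ Xp := hXppow (c' - 1) v₁ hv₁Xp
  have hk2ker : N k2 = 0 := by
    show N ((N ^ (c' - 1)) v₁) = 0
    have h1 : N ((N ^ (c' - 1)) v₁) = (N ^ (1 + (c' - 1))) v₁ := by
      rw [Stmt13Aux.powApp, pow_one]
    rw [h1]
    have h2 : 1 + (c' - 1) = c' := by omega
    rw [h2]
    exact hcP v₁ hv₁Xp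
  -- description of ker N
  have hkerPQ : ∀ y : V, N y = 0 →
      ∃ γ δ : K, y = γ • ((N ^ (a - 1)) x) + δ • ((N ^ (b - 1)) z) := by
    intro y hy
    obtain ⟨u, hu, w, hw, rfl⟩ := hdecomp y
    have hNsum : N u + N w = 0 := by rw [← map_add]; exact hy
    have hNz := hsplit (N u) (N w) (hUinv u hu) (hWinv w hw) hNsum
    obtain ⟨γ, hγ⟩ := hUker u hu hNz.1
    obtain ⟨δ, hδ⟩ := hWker w hw hNz.2
    exact ⟨γ, δ, by rw [hγ, hδ]⟩
  -- every kernel vector of X is a multiple of k1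
  have hscalar : ∀ y ∈ X, N y = 0 → ∃ s : K, y = s • k1 := by
    intro y hyX hyk
    obtain ⟨γ, δ, hy⟩ := hkerPQ y hyk
    obtain ⟨γ₁, δ₁, hk1⟩ := hkerPQ k1 hk1ker
    obtain ⟨γ₂, δ₂, hk2⟩ := hkerPQ k2 hk2ker
    by_cases hD : γ₁ * δ₂ - γ₂ * δ₁ = 0
    · exfalso
      have hμ : ∃ μ : K, k2 = μ • k1 := by
        by_cases hγ : γ₁ = 0
        · have hδ : δ₁ ≠ 0 := by
            intro h
            apply hk1ne
            rw [hk1, hγ, h, zero_smul, zero_smul, add_zero]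
          have hγ₂ : γ₂ = 0 := by
            have h1 : γ₂ * δ₁ = 0 := by
              have : γ₁ * δ₂ - γ₂ * δ₁ = -(γ₂ * δ₁) := by rw [hγ]; ring
              rw [this] at hD
              exact neg_eq_zero.mp hD
            rcases mul_eq_zero.mp h1 with h | h
            · exact h
            · exact absurd h hδ
          refine ⟨δ₂ / δ₁, ?_⟩
          rw [hk2, hk1, hγ, hγ₂]
          match_scalars
          · field_simp
            simp
          · field_simp
        · refine ⟨γ₂ / γ₁, ?_⟩
          rw [hk2, hk1, smul_add, smul_smul, smul_smul]
          have e1 : γ₂ / γ₁ * γ₁ = γ₂ := by field_simp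
          have e2 : γ₂ / γ₁ * δ₁ = δ₂ := by
            field_simp
            linear_combination -hD
          rw [e1, e2]
      obtain ⟨μ, hμ'⟩ := hμ
      have hk2X : k2 ∈ X := by rw [hμ']; exact X.smul_mem μ hk1X
      exact hk2ne (hXXp k2 hk2X hk2Xp)
    · set s := (γ * δ₂ - δ * γ₂) / (γ₁ * δ₂ - γ₂ * δ₁) with hsdef
      set r := (γ₁ * δ - δ₁ * γ) / (γ₁ * δ₂ - γ₂ * δ₁) with hrdef
      have hyr : y - s • k1 = r • k2 := by
        rw [hy, hk1, hk2]
        match_scalars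
        · rw [hsdef, hrdef]
          linear_combination (-γ) * mul_inv_cancel₀ hD
        · rw [hsdef, hrdef]
          linear_combination (-δ) * mul_inv_cancel₀ hD
      have h1 : y - s • k1 ∈ X := X.sub_mem hyX (X.smul_mem _ hk1X)
      have h2 : y - s • k1 ∈ Xp := by rw [hyr]; exact Xp.smul_mem _ hk2Xp
      have h0 : y - s • k1 = 0 := hXXp _ h1 h2
      exact ⟨s, sub_eq_zero.mp h0⟩
  -- X is cyclic, generated by v₀
  have hXcyc : ∀ y ∈ X, y ∈ Submodule.span K (Set.range fun j : ℕ => (N ^ j) v₀) := by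
    set S := Submodule.span K (Set.range fun j : ℕ => (N ^ j) v₀) with hSdef
    have hgenS : ∀ j : ℕ, (N ^ j) v₀ ∈ S := fun j => Submodule.subset_span ⟨j, rfl⟩
    suffices h : ∀ k : ℕ, ∀ y ∈ X, (N ^ k) y = 0 → y ∈ S by
      intro y hy
      exact h c y hy (hcX y hy)
    intro k
    induction k with
    | zero =>
      intro y hy h0
      rw [pow_zero] at h0
      have h1 : y = 0 := h0
      rw [h1]
      exact S.zero_mem
    | succ k ih =>
      intro y hyX hyk
      by_cases h0 : (N ^ k) y = 0
      · exact ih y hyX h0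
      · have hNky : (N ^ k) y ∈ X := hXpow k y hyX
        have hker : N ((N ^ k) y) = 0 := by
          have h1 : (N ^ (k + 1)) y = N ((N ^ k) y) := by rw [pow_succ']; rfl
          rw [← h1]
          exact hyk
        obtain ⟨sc, hs⟩ := hscalar _ hNky hker
        have hkc : k ≤ c - 1 := by
          by_contra hcon
          exact h0 (Stmt13Aux.powZero (hcX y hyX) (by omega))
        have hy'X : y - sc • (N ^ (c - 1 - k)) v₀ ∈ X :=
          X.sub_mem hyX (X.smul_mem _ (hXpow _ _ hv₀X))
        have hy'k : (N ^ k) (y - sc • (N ^ (c - 1 - k)) v₀) = 0 := by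
          rw [map_sub, map_smul, ← Stmt13Aux.powApp]
          have he : k + (c - 1 - k) = c - 1 := by omega
          rw [he, hs]
          exact sub_self _
        have hmem := ih _ hy'X hy'k
        have hyy : y = (y - sc • (N ^ (c - 1 - k)) v₀) + sc • (N ^ (c - 1 - k)) v₀ := by
          abel
        rw [hyy]
        exact S.add_mem hmem (S.smul_mem _ (hgenS _))
  -- the main vanishing: B k1 w = 0 for all w ∈ X
  have hmain : ∀ w ∈ X, B k1 w = 0 := by
    have hgen0 : ∀ j : ℕ, B k1 ((N ^ j) v₀) = 0 := by
      intro j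
      rcases Nat.eq_zero_or_pos j with hj | hj
      · subst hj
        obtain ⟨u, hu, w', hw', huw⟩ := hdecomp v₀
        have hNc : (N ^ c) u + (N ^ c) w' = 0 := by
          rw [← map_add, ← huw]
          exact hcX v₀ hv₀X
        have hcu := hsplit _ _ (powInv _ hUinv c u hu) (powInv _ hWinv c w' hw') hNc
        have hdu := hUdiag u hu c hc1 hcu.1
        have hdw := hWdiag w' hw' c hc1 hcu.2
        have hcross := Stmt13Aux.lemCross hsymm hadj hψN hNψ hchar2V c hc1 u w' hcu.1
        have hexp : B ((N ^ (c - 1)) v₀) ((N ^ 0) v₀)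
            = B ((N ^ (c - 1)) u) u + B ((N ^ (c - 1)) w') w'
              + (B ((N ^ (c - 1)) u) w' + B ((N ^ (c - 1)) w') u) := by
          rw [pow_zero]
          have h0 : ((1 : Module.End K V)) v₀ = v₀ := rfl
          rw [h0, huw]
          simp only [map_add, LinearMap.add_apply]
          ring
        show B ((N ^ (c - 1)) v₀) ((N ^ 0) v₀) = 0
        rw [hexp, hdu, hdw, hcross]
        ring
      · exact Stmt13Aux.lemB hadj hcomm (c - 1) j v₀ v₀
          (Stmt13Aux.powZero (hcX v₀ hv₀X) (by omega))
    intro w hw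
    have hwspan := hXcyc w hw
    have hle : Submodule.span K (Set.range fun j : ℕ => (N ^ j) v₀)
        ≤ LinearMap.ker (B k1) := by
      rw [Submodule.span_le]
      rintro _ ⟨j, rfl⟩
      exact hgen0 j
    exact hle hwspan
  apply hk1ne
  exact hXnd k1 hk1X (fun w hw => by rw [hBpolar]; exact hmain w hw)
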